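/- Let ρ = (ρ₀, ρ₁, ρ₂) be a Markov triple, s := ρ₁ − 3ρ₀ρ₂, μ₁ := (ρ₀, s, ρ₂), μ₀ := (ρ₀ + 3sρ₂, s, ρ₂), μ₂ := (ρ₀, s, ρ₂ + 3sρ₀), and let a, b ∈ ℤ satisfy a·ρ₀² + b·ρ₂² = 1. Then d := b·μ₀ − a·μ₂ satisfies d × ρ = −3·μ₁ and gcd(dᵢ, ρᵢ) = 1 for each i ∈ {0,1,2}; moreover every d' ∈ ℤ³ with d' × ρ = −3·μ₁ equals d + k·ρ for some k ∈ ℤ. -/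

import Mathlib

/-- The standard cross product on `ℤ³`. -/
def cross3 (a b : Fin 3 → ℤ) : Fin 3 → ℤ :=
  ![a 1 * b 2 - a 2 * b 1, a 2 * b 0 - a 0 * b 2, a 0 * b 1 - a 1 * b 0]

/-- Descent step for `x² + y² + z² = 9xyz`. -/
lemma nine_step (x y z : ℤ) (hx : 0 < x) (hy : 0 < y) (hz : 0 < z)
    (hxz : x ≤ z) (hyz : y ≤ z) (heq : x ^ 2 + y ^ 2 + z ^ 2 = 9 * (x * y * z)) :
    0 < 9 * x * y - z ∧ 9 * x * y - z < z ∧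
      x ^ 2 + y ^ 2 + (9 * x * y - z) ^ 2 = 9 * (x * y * (9 * x * y - z)) := by
  have hzz : z * (9 * x * y - z) = x ^ 2 + y ^ 2 := by linear_combination -heq
  have h1 : 0 < 9 * x * y - z := by nlinarith [sq_nonneg x, sq_nonneg y]
  refine ⟨h1, ?_, by linear_combination heq⟩
  by_contra h
  push_neg at h
  nlinarith [mul_pos hx hy, sq_nonneg (x - y), sq_nonneg (x * y)]

/-- `x² + y² + z² = 9xyz` has no positive integer solutions. -/
lemma nine_aux : ∀ n : ℕ, ∀ x y z : ℤ, 0 < x → 0 < y → 0 < z →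
    x ^ 2 + y ^ 2 + z ^ 2 = 9 * (x * y * z) → x + y + z ≤ (n : ℤ) → False := by
  intro n
  induction n with
  | zero => intro x y z hx hy hz _ hle; norm_num at hle; omega
  | succ n ih =>
    intro x y z hx hy hz heq hle
    rcases le_total x y with hxy | hxy
    · rcases le_total y z with hyz | hyz
      · -- z is the max
        obtain ⟨p1, p2, p3⟩ := nine_step x y z hx hy hz (hxy.trans hyz) hyz heq
        exact ih x y (9 * x * y - z) hx hy p1 p3 (by push_cast at hle ⊢; omega)
      · -- y is the max
        obtain ⟨p1, p2, p3⟩ := nine_step x z y hx hz hy hxy hyz (by linear_combination heq)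
        exact ih x z (9 * x * z - y) hx hz p1 p3 (by push_cast at hle ⊢; omega)
    · rcases le_total x z with hxz | hxz
      · -- z is the max
        obtain ⟨p1, p2, p3⟩ := nine_step x y z hx hy hz hxz (hxy.trans hxz) heq
        exact ih x y (9 * x * y - z) hx hy p1 p3 (by push_cast at hle ⊢; omega)
      · -- x is the max
        obtain ⟨p1, p2, p3⟩ := nine_step z y x hz hy hx hxz hxy (by linear_combination heq)
        exact ih z y (9 * z * y - x) hz hy p1 p3 (by push_cast at hle ⊢; omega)

/-- No member of a Markov triple is divisible by 3. -/
lemma markov_not_three_dvd (ρ₀ ρ₁ ρ₂ : ℤ) (h₀ : 0 < ρ₀) (h₁ : 0 < ρ₁) (h₂ : 0 < ρ₂)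
    (hM : ρ₀ ^ 2 + ρ₁ ^ 2 + ρ₂ ^ 2 = 3 * ρ₀ * ρ₁ * ρ₂)
    (h : (3 : ℤ) ∣ ρ₀ ∨ (3 : ℤ) ∣ ρ₁ ∨ (3 : ℤ) ∣ ρ₂) : False := by
  have hz : ((ρ₀ : ZMod 3)) ^ 2 + (ρ₁ : ZMod 3) ^ 2 + (ρ₂ : ZMod 3) ^ 2 = 0 := by
    have h' := congrArg (fun t : ℤ => (t : ZMod 3)) hM
    push_cast at h'
    rw [h', show ((3 : ZMod 3)) = 0 by decide]
    ring
  have hone : (ρ₀ : ZMod 3) = 0 ∨ (ρ₁ : ZMod 3) = 0 ∨ (ρ₂ : ZMod 3) = 0 := by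
    rcases h with h | h | h
    · exact Or.inl ((ZMod.intCast_zmod_eq_zero_iff_dvd _ 3).mpr (by exact_mod_cast h))
    · exact Or.inr (Or.inl ((ZMod.intCast_zmod_eq_zero_iff_dvd _ 3).mpr (by exact_mod_cast h)))
    · exact Or.inr (Or.inr ((ZMod.intCast_zmod_eq_zero_iff_dvd _ 3).mpr (by exact_mod_cast h)))
  have dec : ∀ u v w : ZMod 3, u ^ 2 + v ^ 2 + w ^ 2 = 0 → (u = 0 ∨ v = 0 ∨ w = 0) →
      u = 0 ∧ v = 0 ∧ w = 0 := by decide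
  obtain ⟨e0, e1, e2⟩ := dec _ _ _ hz hone
  obtain ⟨σ₀, rfl⟩ : (3 : ℤ) ∣ ρ₀ := by
    exact_mod_cast (ZMod.intCast_zmod_eq_zero_iff_dvd _ 3).mp e0
  obtain ⟨σ₁, rfl⟩ : (3 : ℤ) ∣ ρ₁ := by
    exact_mod_cast (ZMod.intCast_zmod_eq_zero_iff_dvd _ 3).mp e1
  obtain ⟨σ₂, rfl⟩ : (3 : ℤ) ∣ ρ₂ := by
    exact_mod_cast (ZMod.intCast_zmod_eq_zero_iff_dvd _ 3).mp e2
  have hσ₀ : 0 < σ₀ := by omega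
  have hσ₁ : 0 < σ₁ := by omega
  have hσ₂ : 0 < σ₂ := by omega
  have h9 : σ₀ ^ 2 + σ₁ ^ 2 + σ₂ ^ 2 = 9 * (σ₀ * σ₁ * σ₂) := by
    have h' : (9 : ℤ) * (σ₀ ^ 2 + σ₁ ^ 2 + σ₂ ^ 2) = 9 * (9 * (σ₀ * σ₁ * σ₂)) := by
      linear_combination hM
    exact mul_left_cancel₀ (by norm_num) h'
  exact nine_aux (σ₀ + σ₁ + σ₂).toNat σ₀ σ₁ σ₂ hσ₀ hσ₁ hσ₂ h9
    (by rw [Int.toNat_of_nonneg (by omega)])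

theorem markov_degree_exists (ρ₀ ρ₁ ρ₂ : ℤ)
    (h₀ : 0 < ρ₀) (h₁ : 0 < ρ₁) (h₂ : 0 < ρ₂)
    (hM : ρ₀ ^ 2 + ρ₁ ^ 2 + ρ₂ ^ 2 = 3 * ρ₀ * ρ₁ * ρ₂)
    (s : ℤ) (hs : s = ρ₁ - 3 * ρ₀ * ρ₂)
    (a b : ℤ) (hab : a * ρ₀ ^ 2 + b * ρ₂ ^ 2 = 1)
    (d : Fin 3 → ℤ)
    (hd : d = b • ![ρ₀ + 3 * s * ρ₂, s, ρ₂] - a • ![ρ₀, s, ρ₂ + 3 * s * ρ₀]) :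
    cross3 d ![ρ₀, ρ₁, ρ₂] = (-3 : ℤ) • ![ρ₀, s, ρ₂] ∧
    (Int.gcd (d 0) ρ₀ = 1 ∧ Int.gcd (d 1) ρ₁ = 1 ∧ Int.gcd (d 2) ρ₂ = 1) ∧
    ∀ d' : Fin 3 → ℤ, cross3 d' ![ρ₀, ρ₁, ρ₂] = (-3 : ℤ) • ![ρ₀, s, ρ₂] →
      ∃ k : ℤ, d' = d + k • ![ρ₀, ρ₁, ρ₂] := by
  -- components of d
  have hd0 : d 0 = b * (ρ₀ + 3 * s * ρ₂) - a * ρ₀ := by rw [hd]; simp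
  have hd1 : d 1 = b * s - a * s := by rw [hd]; simp
  have hd2 : d 2 = b * ρ₂ - a * (ρ₂ + 3 * s * ρ₀) := by rw [hd]; simp
  subst hs
  -- cross product components
  have hc0 : d 1 * ρ₂ - d 2 * ρ₁ = -3 * ρ₀ := by
    rw [hd1, hd2]; linear_combination 3 * a * ρ₀ * hM - 3 * ρ₀ * hab
  have hc1 : d 2 * ρ₀ - d 0 * ρ₂ = -3 * (ρ₁ - 3 * ρ₀ * ρ₂) := by
    rw [hd2, hd0]; linear_combination (-3 * (ρ₁ - 3 * ρ₀ * ρ₂)) * hab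
  have hc2 : d 0 * ρ₁ - d 1 * ρ₀ = -3 * ρ₂ := by
    rw [hd0, hd1]; linear_combination 3 * b * ρ₂ * hM - 3 * ρ₂ * hab
  have hcross : cross3 d ![ρ₀, ρ₁, ρ₂] = (-3 : ℤ) • ![ρ₀, ρ₁ - 3 * ρ₀ * ρ₂, ρ₂] := by
    have g0 : cross3 d ![ρ₀, ρ₁, ρ₂] 0 = ((-3 : ℤ) • ![ρ₀, ρ₁ - 3 * ρ₀ * ρ₂, ρ₂]) 0 := by
      simp [cross3]; linarith [hc0]
    have g1 : cross3 d ![ρ₀, ρ₁, ρ₂] 1 = ((-3 : ℤ) • ![ρ₀, ρ₁ - 3 * ρ₀ * ρ₂, ρ₂]) 1 := by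
      simp [cross3]; linarith [hc1]
    have g2 : cross3 d ![ρ₀, ρ₁, ρ₂] 2 = ((-3 : ℤ) • ![ρ₀, ρ₁ - 3 * ρ₀ * ρ₂, ρ₂]) 2 := by
      simp [cross3]; linarith [hc2]
    funext i
    fin_cases i
    · exact g0
    · exact g1
    · exact g2
  -- coprimality facts
  have not3 : (3 : ℤ) ∣ ρ₀ ∨ (3 : ℤ) ∣ ρ₁ ∨ (3 : ℤ) ∣ ρ₂ → False :=
    fun h => markov_not_three_dvd ρ₀ ρ₁ ρ₂ h₀ h₁ h₂ hM h
  have cop3_0 : IsCoprime (3 : ℤ) ρ₀ :=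
    (Int.prime_three.coprime_iff_not_dvd).mpr (fun h => not3 (Or.inl h))
  have cop3_1 : IsCoprime (3 : ℤ) ρ₁ :=
    (Int.prime_three.coprime_iff_not_dvd).mpr (fun h => not3 (Or.inr (Or.inl h)))
  have cop3_2 : IsCoprime (3 : ℤ) ρ₂ :=
    (Int.prime_three.coprime_iff_not_dvd).mpr (fun h => not3 (Or.inr (Or.inr h)))
  have cop02 : IsCoprime ρ₀ ρ₂ := ⟨a * ρ₀, b * ρ₂, by linear_combination hab⟩
  have cop21 : IsCoprime ρ₂ ρ₁ :=
    ⟨(b - a) * ρ₂, a * (3 * ρ₀ * ρ₂ - ρ₁), by linear_combination hab - a * hM⟩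
  have cop01 : IsCoprime ρ₀ ρ₁ :=
    ⟨(a - b) * ρ₀, b * (3 * ρ₀ * ρ₂ - ρ₁), by linear_combination hab - b * hM⟩
  -- gcd d0 ρ₀
  have key0 : d 0 * ρ₁ = -(3 * ρ₂) + ρ₀ * ((b - a) * (ρ₁ - 3 * ρ₀ * ρ₂)) := by
    rw [hd0]; linear_combination 3 * b * ρ₂ * hM - 3 * ρ₂ * hab
  have g0 : IsCoprime (d 0) ρ₀ := by
    have c1 : IsCoprime (-(3 * ρ₂)) ρ₀ := (cop3_0.mul_left cop02.symm).neg_left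
    have c2 : IsCoprime (d 0 * ρ₁) ρ₀ := by
      rw [key0]; exact c1.add_mul_left_left _
    exact c2.of_mul_left_left
  -- gcd d1 ρ₁
  have key1 : d 1 * ρ₀ = 3 * ρ₂ + ρ₁ * ((b - a) * ρ₀ + 3 * b * ρ₁ * ρ₂ - 9 * b * ρ₀ * ρ₂ ^ 2) := by
    rw [hd1]; linear_combination 3 * ρ₂ * hab - 3 * b * ρ₂ * hM
  have g1 : IsCoprime (d 1) ρ₁ := by
    have c1 : IsCoprime (3 * ρ₂) ρ₁ := cop3_1.mul_left cop21
    have c2 : IsCoprime (d 1 * ρ₀) ρ₁ := by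
      rw [key1]; exact c1.add_mul_left_left _
    exact c2.of_mul_left_left
  -- gcd d2 ρ₂
  have key2 : d 2 * ρ₁ = 3 * ρ₀ + ρ₂ * ((b - a) * (ρ₁ - 3 * ρ₀ * ρ₂)) := by
    rw [hd2]; linear_combination (-3 : ℤ) * a * ρ₀ * hM + 3 * ρ₀ * hab
  have g2 : IsCoprime (d 2) ρ₂ := by
    have c1 : IsCoprime (3 * ρ₀) ρ₂ := cop3_2.mul_left cop02
    have c2 : IsCoprime (d 2 * ρ₁) ρ₂ := by
      rw [key2]; exact c1.add_mul_left_left _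
    exact c2.of_mul_left_left
  refine ⟨hcross, ⟨Int.isCoprime_iff_gcd_eq_one.mp g0, Int.isCoprime_iff_gcd_eq_one.mp g1,
    Int.isCoprime_iff_gcd_eq_one.mp g2⟩, ?_⟩
  -- uniqueness
  intro d' hd'
  have e'1 := congrFun hd' 1
  have e'2 := congrFun hd' 2
  simp only [cross3, Matrix.cons_val_zero, Matrix.cons_val_one, Matrix.head_cons,
    Matrix.cons_val_two, Matrix.tail_cons, Pi.smul_apply, smul_eq_mul,
    Matrix.cons_val', Matrix.empty_val', Matrix.cons_val_fin_one, Fin.isValue] at e'1 e'2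
  have p2 : (d' 0 - d 0) * ρ₁ = (d' 1 - d 1) * ρ₀ := by nlinarith [e'2, hc2]
  have p1 : (d' 2 - d 2) * ρ₀ = (d' 0 - d 0) * ρ₂ := by nlinarith [e'1, hc1]
  have hdvd : ρ₀ ∣ (d' 0 - d 0) :=
    cop01.dvd_of_dvd_mul_right ⟨d' 1 - d 1, by linarith [p2]⟩
  obtain ⟨k, hk⟩ := hdvd
  refine ⟨k, ?_⟩
  have h0' : d' 0 = d 0 + k * ρ₀ := by linarith [hk]
  have h1' : d' 1 = d 1 + k * ρ₁ := by
    have hh : (d' 1 - d 1) * ρ₀ = (k * ρ₁) * ρ₀ := by rw [← p2, hk]; ring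
    have := mul_right_cancel₀ (ne_of_gt h₀) hh
    linarith
  have h2' : d' 2 = d 2 + k * ρ₂ := by
    have hh : (d' 2 - d 2) * ρ₀ = (k * ρ₂) * ρ₀ := by rw [p1, hk]; ring
    have := mul_right_cancel₀ (ne_of_gt h₀) hh
    linarith
  have q0 : d' 0 = (d + k • ![ρ₀, ρ₁, ρ₂]) 0 := by simpa using h0'
  have q1 : d' 1 = (d + k • ![ρ₀, ρ₁, ρ₂]) 1 := by simpa using h1'
  have q2 : d' 2 = (d + k • ![ρ₀, ρ₁, ρ₂]) 2 := by simpa using h2'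
  funext i
  fin_cases i
  · exact q0
  · exact q1
  · exact q2
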